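/- There exists a finite simple graph G and a vertex v of G with deg_G(v) ≥ 2 such that γst(G/v) = γst(G) − deg_G(v) + 1; that is, the lower bound γst(G) − deg_G(v) + 1 ≤ γst(G/v) for non-pendant vertices is tight. -/

import Mathlib

/-- The degree of a vertex `x` in a graph `G`. -/
noncomputable def sdeg {V : Type*} (G : SimpleGraph V) (x : V) : ℕ :=
  (G.neighborSet x).ncard

/-- `D` is a strong dominating set of `G`: every vertex `x ∉ D` has a neighbor
`y ∈ D` with `deg x ≤ deg y`. -/
def IsStrongDominating {V : Type*} (G : SimpleGraph V) (D : Set V) : Prop :=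
  ∀ x ∉ D, ∃ y ∈ D, G.Adj x y ∧ sdeg G x ≤ sdeg G y

/-- The strong domination number of `G`. -/
noncomputable def sdn {V : Type*} (G : SimpleGraph V) : ℕ :=
  sInf {n | ∃ D : Set V, IsStrongDominating G D ∧ D.ncard = n}

/-- Vertex deletion `G - v`: the induced subgraph on the complement of `{v}`. -/
def delVtx {V : Type*} (G : SimpleGraph V) (v : V) : SimpleGraph {x : V // x ≠ v} where
  Adj a b := G.Adj a.1 b.1
  symm := ⟨fun a b h => G.adj_symm h⟩
  loopless := ⟨fun a h => G.irrefl h⟩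

/-- Vertex contraction `G / v`: delete `v` and put a clique on its open neighborhood. -/
def contractVtx {V : Type*} (G : SimpleGraph V) (v : V) : SimpleGraph {x : V // x ≠ v} where
  Adj a b := a ≠ b ∧ (G.Adj a.1 b.1 ∨ (G.Adj v a.1 ∧ G.Adj v b.1))
  symm := by
    constructor
    rintro a b ⟨hab, h | ⟨ha, hb⟩⟩
    · exact ⟨hab.symm, Or.inl h.symm⟩
    · exact ⟨hab.symm, Or.inr ⟨hb, ha⟩⟩
  loopless := by constructor; rintro a ⟨h, -⟩; exact h rfl

/-- `G ⊙ v`: remove all edges between any pair of neighbors of `v`. -/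
def odotVtx {V : Type*} (G : SimpleGraph V) (v : V) : SimpleGraph V where
  Adj x y := G.Adj x y ∧ ¬(G.Adj v x ∧ G.Adj v y)
  symm := by
    constructor
    rintro x y ⟨h, hn⟩
    exact ⟨h.symm, fun hc => hn ⟨hc.2, hc.1⟩⟩
  loopless := by constructor; rintro x ⟨h, -⟩; exact G.irrefl h

/-- Edge contraction `G / uv`: merge `v` into `u`. -/
def contractEdge {V : Type*} (G : SimpleGraph V) (u v : V) : SimpleGraph {x : V // x ≠ v} where
  Adj a b := a ≠ b ∧ (G.Adj a.1 b.1 ∨ (a.1 = u ∧ G.Adj v b.1) ∨ (b.1 = u ∧ G.Adj v a.1))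
  symm := by
    constructor
    rintro a b ⟨hab, h | h | h⟩
    · exact ⟨hab.symm, Or.inl h.symm⟩
    · exact ⟨hab.symm, Or.inr (Or.inr h)⟩
    · exact ⟨hab.symm, Or.inr (Or.inl h)⟩
  loopless := by constructor; rintro a ⟨h, -⟩; exact h rfl

/-- The star `K_{1,n}` with center `none` and leaves `some i`. -/
def starG (n : ℕ) : SimpleGraph (Option (Fin n)) where
  Adj a b := (a = none ∧ b ≠ none) ∨ (a ≠ none ∧ b = none)
  symm := by
    constructor
    rintro a b (⟨h1, h2⟩ | ⟨h1, h2⟩)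
    · exact Or.inr ⟨h2, h1⟩
    · exact Or.inl ⟨h2, h1⟩
  loopless := by
    constructor
    rintro a (⟨h1, h2⟩ | ⟨h1, h2⟩)
    exacts [h2 h1, h1 h2]

/-- The path graph `P_n` on vertices `0, …, n-1`, consecutive integers adjacent. -/
def pathG (n : ℕ) : SimpleGraph (Fin n) where
  Adj i j := i.1 + 1 = j.1 ∨ j.1 + 1 = i.1
  symm := ⟨fun i j h => h.symm⟩
  loopless := by constructor; rintro i (h | h) <;> omega

instance pathG.adjDec (n : ℕ) : DecidableRel (pathG n).Adj :=
  fun i j => inferInstanceAs (Decidable (i.1 + 1 = j.1 ∨ j.1 + 1 = i.1))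

instance contractVtx.adjDec {V : Type*} [DecidableEq V] (G : SimpleGraph V)
    [DecidableRel G.Adj] (v : V) : DecidableRel (contractVtx G v).Adj :=
  fun a b => inferInstanceAs (Decidable (_ ∧ _))

-- neighbor sets in P4
lemma ns0 : (pathG 4).neighborSet 0 = {1} := by
  ext x
  simp only [SimpleGraph.mem_neighborSet, Set.mem_singleton_iff]
  revert x; decide
lemma ns1 : (pathG 4).neighborSet 1 = {0, 2} := by
  ext x
  simp only [SimpleGraph.mem_neighborSet, Set.mem_insert_iff, Set.mem_singleton_iff]
  revert x; decide
lemma ns2 : (pathG 4).neighborSet 2 = {1, 3} := by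
  ext x
  simp only [SimpleGraph.mem_neighborSet, Set.mem_insert_iff, Set.mem_singleton_iff]
  revert x; decide
lemma ns3 : (pathG 4).neighborSet 3 = {2} := by
  ext x
  simp only [SimpleGraph.mem_neighborSet, Set.mem_singleton_iff]
  revert x; decide

lemma sdeg0 : sdeg (pathG 4) 0 = 1 := by rw [sdeg, ns0, Set.ncard_singleton]
lemma sdeg1 : sdeg (pathG 4) 1 = 2 := by rw [sdeg, ns1]; exact Set.ncard_pair (by decide)
lemma sdeg2 : sdeg (pathG 4) 2 = 2 := by rw [sdeg, ns2]; exact Set.ncard_pair (by decide)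
lemma sdeg3 : sdeg (pathG 4) 3 = 1 := by rw [sdeg, ns3, Set.ncard_singleton]

lemma sdn_p4 : sdn (pathG 4) = 2 := by
  have hmem : (2 : ℕ) ∈ {n | ∃ D : Set (Fin 4), IsStrongDominating (pathG 4) D ∧ D.ncard = n} := by
    refine ⟨{1, 2}, ?_, Set.ncard_pair (by decide)⟩
    intro x hx
    simp only [Set.mem_insert_iff, Set.mem_singleton_iff, not_or] at hx
    have h03 : x = 0 ∨ x = 3 := by
      obtain ⟨h1, h2⟩ := hx; revert h1 h2; revert x; decide
    rcases h03 with rfl | rfl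
    · exact ⟨1, by simp, by decide, by rw [sdeg0, sdeg1]; omega⟩
    · exact ⟨2, by simp, by decide, by rw [sdeg3, sdeg2]; omega⟩
  refine le_antisymm (Nat.sInf_le hmem) (le_csInf ⟨2, hmem⟩ ?_)
  rintro n ⟨D, hD, rfl⟩
  have key : ∃ a ∈ D, ∃ b ∈ D, a ≠ b := by
    by_cases h3 : (3 : Fin 4) ∈ D
    · by_cases h1 : (1 : Fin 4) ∈ D
      · exact ⟨1, h1, 3, h3, by decide⟩
      · obtain ⟨y, hyD, hadj, -⟩ := hD 1 h1
        refine ⟨y, hyD, 3, h3, ?_⟩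
        rintro rfl
        revert hadj; decide
    · obtain ⟨y, hyD, hadj, -⟩ := hD 3 h3
      have hy2 : y = 2 := (by decide : ∀ w : Fin 4, (pathG 4).Adj 3 w → w = 2) y hadj
      subst hy2
      by_cases h0 : (0 : Fin 4) ∈ D
      · exact ⟨0, h0, 2, hyD, by decide⟩
      · obtain ⟨z, hzD, hadjz, -⟩ := hD 0 h0
        have hz : z = 1 := (by decide : ∀ w : Fin 4, (pathG 4).Adj 0 w → w = 1) z hadjz
        subst hz
        exact ⟨1, hzD, 2, hyD, by decide⟩
  exact (Set.one_lt_ncard (Set.toFinite D)).mpr key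

-- contracted graph
def c0 : {x : Fin 4 // x ≠ 1} := ⟨0, by decide⟩
def c2 : {x : Fin 4 // x ≠ 1} := ⟨2, by decide⟩
def c3 : {x : Fin 4 // x ≠ 1} := ⟨3, by decide⟩

lemma cns0 : (contractVtx (pathG 4) 1).neighborSet c0 = {c2} := by
  ext x
  simp only [SimpleGraph.mem_neighborSet, Set.mem_singleton_iff]
  revert x; decide
lemma cns2 : (contractVtx (pathG 4) 1).neighborSet c2 = {c0, c3} := by
  ext x
  simp only [SimpleGraph.mem_neighborSet, Set.mem_insert_iff, Set.mem_singleton_iff]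
  revert x; decide
lemma cns3 : (contractVtx (pathG 4) 1).neighborSet c3 = {c2} := by
  ext x
  simp only [SimpleGraph.mem_neighborSet, Set.mem_singleton_iff]
  revert x; decide

lemma csdeg0 : sdeg (contractVtx (pathG 4) 1) c0 = 1 := by rw [sdeg, cns0, Set.ncard_singleton]
lemma csdeg2 : sdeg (contractVtx (pathG 4) 1) c2 = 2 := by
  rw [sdeg, cns2]; exact Set.ncard_pair (by decide)
lemma csdeg3 : sdeg (contractVtx (pathG 4) 1) c3 = 1 := by rw [sdeg, cns3, Set.ncard_singleton]

lemma sdn_c : sdn (contractVtx (pathG 4) 1) = 1 := by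
  have hmem : (1 : ℕ) ∈ {n | ∃ D : Set {x : Fin 4 // x ≠ 1},
      IsStrongDominating (contractVtx (pathG 4) 1) D ∧ D.ncard = n} := by
    refine ⟨{c2}, ?_, Set.ncard_singleton _⟩
    intro x hx
    simp only [Set.mem_singleton_iff] at hx
    have h03 : x = c0 ∨ x = c3 := by revert hx; revert x; decide
    rcases h03 with rfl | rfl
    · exact ⟨c2, rfl, by decide, by rw [csdeg0, csdeg2]; omega⟩
    · exact ⟨c2, rfl, by decide, by rw [csdeg3, csdeg2]; omega⟩
  refine le_antisymm (Nat.sInf_le hmem) (le_csInf ⟨1, hmem⟩ ?_)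
  rintro n ⟨D, hD, rfl⟩
  rw [Nat.one_le_iff_ne_zero, Ne, Set.ncard_eq_zero (Set.toFinite _)]
  rintro rfl
  obtain ⟨y, hy, -⟩ := hD c0 (Set.notMem_empty _)
  exact hy

/-- the lower bound γst(G) − deg_G(v) + 1 ≤ γst(G/v) for non-pendant
vertices is tight. -/
theorem sdn_contractVtx_lower_bound_tight :
    ∃ (n : ℕ) (G : SimpleGraph (Fin n)) (v : Fin n),
      2 ≤ sdeg G v ∧ (sdn (contractVtx G v) : ℤ) = (sdn G : ℤ) - (sdeg G v : ℤ) + 1 := by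
  exact ⟨4, pathG 4, 1, by rw [sdeg1], by rw [sdn_c, sdn_p4, sdeg1]; norm_num⟩
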